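/- arXiv:2403.01037 — 2 statements merged into one kernel-verified Lean document; each statement's English description precedes it below -/
import Mathlib

section
/- Let α_n be the effective resistance across the first rung of the ladder graph P_2 □ P_n (i.e., between vertices (1,1) and (2,1)). Then the sequence (α_n) is strictly decreasing, satisfies α_n > √3 − 1 for all n ≥ 1, and converges to √3 − 1 as n → ∞. -/
open Classical Matrix

/-- The four Penrose conditions characterizing the Moore–Penrose pseudoinverse
of a real square matrix. -/
def IsMoorePenroseInverse {V : Type*} [Fintype V] [DecidableEq V]
    (L P : Matrix V V ℝ) : Prop :=
  L * P * L = L ∧ P * L * P = P ∧ (L * P)ᵀ = L * P ∧ (P * L)ᵀ = P * L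

/-- The Moore–Penrose pseudoinverse of a real square matrix. -/
noncomputable def pinv {V : Type*} [Fintype V] [DecidableEq V]
    (L : Matrix V V ℝ) : Matrix V V ℝ :=
  if h : ∃ P, IsMoorePenroseInverse L P then h.choose else 0

section MP
variable {V : Type*} [Fintype V] [DecidableEq V]

lemma mp_unique {L P Q : Matrix V V ℝ}
    (hP : IsMoorePenroseInverse L P) (hQ : IsMoorePenroseInverse L Q) : P = Q := by
  obtain ⟨p1, p2, p3, p4⟩ := hP
  obtain ⟨q1, q2, q3, q4⟩ := hQ
  have hA : L * P = L * Q := by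
    calc L * P = (L * P)ᵀ := p3.symm
    _ = Pᵀ * Lᵀ := by rw [transpose_mul]
    _ = Pᵀ * (L * Q * L)ᵀ := by rw [q1]
    _ = Pᵀ * (Lᵀ * (L * Q)ᵀ) := by rw [transpose_mul]
    _ = Pᵀ * (Lᵀ * (L * Q)) := by rw [q3]
    _ = (Pᵀ * Lᵀ) * (L * Q) := by rw [Matrix.mul_assoc]
    _ = (L * P)ᵀ * (L * Q) := by rw [transpose_mul]
    _ = (L * P) * (L * Q) := by rw [p3]
    _ = (L * P * L) * Q := by simp only [Matrix.mul_assoc]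
    _ = L * Q := by rw [p1]
  have hB : P * L = Q * L := by
    calc P * L = (P * L)ᵀ := p4.symm
    _ = Lᵀ * Pᵀ := by rw [transpose_mul]
    _ = (L * Q * L)ᵀ * Pᵀ := by rw [q1]
    _ = ((Q * L)ᵀ * Lᵀ) * Pᵀ := by simp only [transpose_mul, Matrix.mul_assoc]
    _ = (Q * L) * (Lᵀ * Pᵀ) := by rw [q4]; simp only [Matrix.mul_assoc]
    _ = (Q * L) * (P * L)ᵀ := by rw [transpose_mul]
    _ = (Q * L) * (P * L) := by rw [p4]
    _ = Q * (L * P * L) := by rw [Matrix.mul_assoc, Matrix.mul_assoc]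
    _ = Q * L := by rw [p1]
  calc P = P * L * P := p2.symm
  _ = Q * L * P := by rw [hB]
  _ = Q * (L * P) := by rw [Matrix.mul_assoc]
  _ = Q * (L * Q) := by rw [hA]
  _ = Q * L * Q := by rw [Matrix.mul_assoc]
  _ = Q := q2

lemma pinv_eq {L P : Matrix V V ℝ} (h : IsMoorePenroseInverse L P) : pinv L = P := by
  have hex : ∃ P, IsMoorePenroseInverse L P := ⟨P, h⟩
  rw [pinv, dif_pos hex]
  exact mp_unique hex.choose_spec h

lemma mp_transpose_symm {L P : Matrix V V ℝ} (hL : Lᵀ = L)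
    (h : IsMoorePenroseInverse L P) : Pᵀ = P := by
  obtain ⟨p1, p2, p3, p4⟩ := h
  have c1 : L * Pᵀ * L = L := by
    calc L * Pᵀ * L = (Lᵀ * (P * Lᵀ))ᵀ := by
          simp only [transpose_mul, transpose_transpose, Matrix.mul_assoc]
    _ = (L * (P * L))ᵀ := by rw [hL]
    _ = (L * P * L)ᵀ := by simp only [Matrix.mul_assoc]
    _ = L := by rw [p1, hL]
  have c2 : Pᵀ * L * Pᵀ = Pᵀ := by
    calc Pᵀ * L * Pᵀ = (P * (Lᵀ * P))ᵀ := by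
          simp only [transpose_mul, transpose_transpose, Matrix.mul_assoc]
    _ = (P * L * P)ᵀ := by rw [hL]; simp only [Matrix.mul_assoc]
    _ = Pᵀ := by rw [p2]
  have c3 : (L * Pᵀ)ᵀ = L * Pᵀ := by
    calc (L * Pᵀ)ᵀ = P * Lᵀ := by rw [transpose_mul, transpose_transpose]
    _ = (P * L)ᵀ := by rw [hL, p4]
    _ = Lᵀ * Pᵀ := by rw [transpose_mul]
    _ = L * Pᵀ := by rw [hL]
  have c4 : (Pᵀ * L)ᵀ = Pᵀ * L := by
    calc (Pᵀ * L)ᵀ = Lᵀ * P := by rw [transpose_mul, transpose_transpose]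
    _ = (L * P)ᵀ := by rw [hL, p3]
    _ = Pᵀ * Lᵀ := by rw [transpose_mul]
    _ = Pᵀ * L := by rw [hL]
  exact mp_unique ⟨c1, c2, c3, c4⟩ ⟨p1, p2, p3, p4⟩

lemma exists_mp [Nonempty V] (G : SimpleGraph V) [DecidableRel G.Adj] (hG : G.Connected) :
    ∃ P, IsMoorePenroseInverse (G.lapMatrix ℝ) P := by
  set L : Matrix V V ℝ := G.lapMatrix ℝ with hLdef
  have hL : Lᵀ = L := G.isSymm_lapMatrix (R := ℝ)
  set c : ℝ := (Fintype.card V : ℝ)⁻¹ with hc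
  have hcard : (0:ℝ) < (Fintype.card V : ℝ) := by
    exact_mod_cast Fintype.card_pos
  set K : Matrix V V ℝ := Matrix.of fun _ _ => c with hK
  have hrow : ∀ i, ∑ j, L i j = 0 := by
    intro i
    have := congrFun (G.lapMatrix_mulVec_const_eq_zero (R := ℝ)) i
    simpa [Matrix.mulVec, dotProduct] using this
  have hLK : L * K = 0 := by
    ext i j
    simp only [Matrix.mul_apply, hK, Matrix.of_apply, Matrix.zero_apply, ← Finset.sum_mul]
    rw [hrow i, zero_mul]
  have hKL : K * L = 0 := by
    ext i j
    simp only [Matrix.mul_apply, hK, Matrix.of_apply, Matrix.zero_apply, ← Finset.mul_sum]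
    have : ∑ k, L k j = 0 := by
      have : ∀ k, L k j = L j k := fun k => by
        conv_lhs => rw [← hL]
        rfl
      simp_rw [this]
      exact hrow j
    rw [this, mul_zero]
  have hKK : K * K = K := by
    ext i j
    simp only [Matrix.mul_apply, hK, Matrix.of_apply, Finset.sum_const, Finset.card_univ,
      nsmul_eq_mul]
    have hN : (Fintype.card V : ℝ) ≠ 0 := ne_of_gt hcard
    rw [hc]
    field_simp
  set M : Matrix V V ℝ := L + K with hM
  -- M is invertible
  have hdet : IsUnit M.det := by
    rw [isUnit_iff_ne_zero]
    intro hdet0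
    obtain ⟨w, hw0, hw⟩ := (Matrix.exists_mulVec_eq_zero_iff).2 hdet0
    -- w ⬝ᵥ M w = 0
    have hsplit : w ⬝ᵥ (L *ᵥ w) + w ⬝ᵥ (K *ᵥ w) = 0 := by
      rw [← dotProduct_add, ← Matrix.add_mulVec, ← hM, hw, dotProduct_zero]
    have hKw : w ⬝ᵥ (K *ᵥ w) = c * (∑ i, w i) ^ 2 := by
      simp only [dotProduct, Matrix.mulVec, dotProduct, hK, Matrix.of_apply,
        ← Finset.mul_sum]
      rw [← Finset.sum_mul]
      ring
    have hLw : 0 ≤ w ⬝ᵥ (L *ᵥ w) := by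
      have := (G.posSemidef_lapMatrix ℝ).dotProduct_mulVec_nonneg w
      simpa [Matrix.toLinearMap₂'_apply'] using this
    have hKw' : 0 ≤ w ⬝ᵥ (K *ᵥ w) := by
      rw [hKw]
      positivity
    have hLw0 : w ⬝ᵥ (L *ᵥ w) = 0 := by linarith
    have hconst : ∀ i j, w i = w j := by
      intro i j
      have h0 : Matrix.toLinearMap₂' ℝ (G.lapMatrix ℝ) w w = 0 := by
        rw [Matrix.toLinearMap₂'_apply']
        exact hLw0
      exact (G.lapMatrix_toLinearMap₂'_apply'_eq_zero_iff_forall_reachable w).1 h0 i j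
        (hG.preconnected i j)
    have hsum : (∑ i, w i) = 0 := by
      have : c * (∑ i, w i) ^ 2 = 0 := by linarith
      have hc0 : c ≠ 0 := by positivity
      have := mul_eq_zero.1 this
      rcases this with h | h
      · exact absurd h hc0
      · exact pow_eq_zero_iff (by norm_num) |>.1 h
    apply hw0
    funext i
    have : (∑ j, w j) = (Fintype.card V : ℝ) * w i := by
      rw [Finset.sum_congr rfl (fun j _ => hconst j i)]
      simp [Finset.card_univ]
    have : (Fintype.card V : ℝ) * w i = 0 := by rw [← this, hsum]
    have := mul_eq_zero.1 this
    simpa using this.resolve_left (by positivity)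
  have hMK : M * K = K := by rw [hM, add_mul, hLK, hKK, zero_add]
  have hKM : K * M = K := by rw [hM, mul_add, hKL, hKK, zero_add]
  have hMinv : M * M⁻¹ = 1 := Matrix.mul_nonsing_inv M hdet
  have hinvM : M⁻¹ * M = 1 := Matrix.nonsing_inv_mul M hdet
  have hiK : M⁻¹ * K = K := by
    calc M⁻¹ * K = M⁻¹ * (M * K) := by rw [hMK]
    _ = (M⁻¹ * M) * K := by rw [Matrix.mul_assoc]
    _ = K := by rw [hinvM, Matrix.one_mul]
  have hKi : K * M⁻¹ = K := by
    calc K * M⁻¹ = (K * M) * M⁻¹ := by rw [hKM]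
    _ = K * (M * M⁻¹) := by rw [Matrix.mul_assoc]
    _ = K := by rw [hMinv, Matrix.mul_one]
  set P : Matrix V V ℝ := M⁻¹ - K with hP
  have hLM : L = M - K := by rw [hM]; abel
  have hLP : L * P = 1 - K := by
    rw [hLM, hP, Matrix.sub_mul, Matrix.mul_sub, Matrix.mul_sub, hMinv, hMK, hKi, hKK]
    abel
  have hPL : P * L = 1 - K := by
    rw [hLM, hP, Matrix.sub_mul, Matrix.mul_sub, Matrix.mul_sub, hinvM, hiK, hKM, hKK]
    abel
  have hKP : K * P = 0 := by rw [hP, Matrix.mul_sub, hKi, hKK, sub_self]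
  have hKsymm : Kᵀ = K := by ext i j; rfl
  refine ⟨P, ?_, ?_, ?_, ?_⟩
  · rw [hLP, Matrix.sub_mul, Matrix.one_mul, hKL, sub_zero]
  · rw [hPL, Matrix.sub_mul, Matrix.one_mul, hKP, sub_zero]
  · rw [hLP, transpose_sub, transpose_one, hKsymm]
  · rw [hPL, transpose_sub, transpose_one, hKsymm]

end MP

/-- Effective resistance between `x` and `y` computed from a (weighted) Laplacian `L`. -/
noncomputable def effResM {V : Type*} [Fintype V] [DecidableEq V]
    (L : Matrix V V ℝ) (x y : V) : ℝ :=
  pinv L x x + pinv L y y - 2 * pinv L x y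

/-- Effective resistance between vertices `x` and `y` of a simple graph `G`. -/
noncomputable def effRes {V : Type*} [Fintype V] [DecidableEq V]
    (G : SimpleGraph V) (x y : V) : ℝ :=
  effResM (G.lapMatrix ℝ) x y

lemma effRes_eq_of_mulVec {V : Type*} [Fintype V] [DecidableEq V] [Nonempty V]
    (G : SimpleGraph V) (hG : G.Connected) (x y : V) (v : V → ℝ)
    (hv : G.lapMatrix ℝ *ᵥ v = Pi.single x 1 - Pi.single y 1) :
    effRes G x y = v x - v y := by
  classical
  set L : Matrix V V ℝ := G.lapMatrix ℝ with hLdef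
  have hL : Lᵀ = L := G.isSymm_lapMatrix (R := ℝ)
  have hP : IsMoorePenroseInverse L (pinv L) := by
    obtain ⟨P, hP⟩ := exists_mp G hG
    rw [pinv_eq hP]
    exact hP
  set P : Matrix V V ℝ := pinv L with hPdef
  have hsymm : Pᵀ = P := mp_transpose_symm hL hP
  obtain ⟨p1, p2, p3, p4⟩ := hP
  set δ : V → ℝ := Pi.single x 1 - Pi.single y 1 with hδ
  have key : δ ⬝ᵥ (P *ᵥ δ) = P x x + P y y - 2 * P x y := by
    have hyx : P y x = P x y := by
      have := congrFun (congrFun hsymm x) y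
      simpa [Matrix.transpose_apply] using this
    simp only [hδ, Matrix.mulVec_sub, Matrix.mulVec_single_one, sub_dotProduct,
      dotProduct_sub, single_dotProduct, Pi.sub_apply, Matrix.col_apply, one_mul, mul_one]
    rw [hyx]
    ring
  have key2 : δ ⬝ᵥ (P *ᵥ δ) = v x - v y := by
    conv_lhs => rw [← hv]
    rw [Matrix.mulVec_mulVec]
    have hstep : L *ᵥ v = v ᵥ* L := by
      conv_lhs => rw [← hL]
      rw [Matrix.mulVec_transpose]
    rw [hstep, ← Matrix.dotProduct_mulVec, Matrix.mulVec_mulVec, ← Matrix.mul_assoc, p1, hv]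
    simp [hδ, dotProduct_sub, dotProduct_single]
  have : effRes G x y = P x x + P y y - 2 * P x y := rfl
  rw [this, ← key, key2]

lemma lap_mulVec_if {V : Type*} [Fintype V] [DecidableEq V]
    (G : SimpleGraph V) [DecidableRel G.Adj] (v : V → ℝ) (z : V) :
    (G.lapMatrix ℝ *ᵥ v) z = ∑ u : V, if G.Adj z u then v z - v u else 0 := by
  rw [SimpleGraph.lapMatrix_mulVec_apply, SimpleGraph.degree_eq_sum_if_adj,
    SimpleGraph.neighborFinset_eq_filter, Finset.sum_filter, Finset.sum_mul]
  rw [← Finset.sum_sub_distrib]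
  congr 1
  funext u
  by_cases h : G.Adj z u <;> simp [h]

lemma path_sum {n : ℕ} (k : Fin n) (g : Fin n → ℝ) :
    ∑ l : Fin n, (if (SimpleGraph.pathGraph n).Adj k l then g l else 0)
      = (if h : (k:ℕ)+1 < n then g ⟨(k:ℕ)+1, h⟩ else 0)
        + (if h : 0 < (k:ℕ) then g ⟨(k:ℕ)-1, by omega⟩ else 0) := by
  have hsplit : ∀ l : Fin n, (if (SimpleGraph.pathGraph n).Adj k l then g l else 0)
      = (if (k:ℕ)+1 = (l:ℕ) then g l else 0) + (if (l:ℕ)+1 = (k:ℕ) then g l else 0) := by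
    intro l
    rw [SimpleGraph.pathGraph_adj]
    by_cases h1 : (k:ℕ)+1 = (l:ℕ) <;> by_cases h2 : (l:ℕ)+1 = (k:ℕ) <;>
      simp [h1, h2] <;> omega
  simp_rw [hsplit]
  rw [Finset.sum_add_distrib]
  congr 1
  · by_cases h : (k:ℕ)+1 < n
    · rw [dif_pos h]
      have : ∀ l : Fin n, ((k:ℕ)+1 = (l:ℕ)) ↔ l = ⟨(k:ℕ)+1, h⟩ := by
        intro l
        constructor
        · intro hl; exact Fin.ext hl.symm
        · intro hl; rw [hl]
      simp_rw [this]
      simp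
    · rw [dif_neg h]
      apply Finset.sum_eq_zero
      intro l _
      rw [if_neg]
      intro hl
      omega
  · by_cases h : 0 < (k:ℕ)
    · rw [dif_pos h]
      have : ∀ l : Fin n, ((l:ℕ)+1 = (k:ℕ)) ↔ l = ⟨(k:ℕ)-1, by omega⟩ := by
        intro l
        constructor
        · intro hl; apply Fin.ext; simp; omega
        · intro hl; rw [hl]; simp; omega
      simp_rw [this]
      simp
    · rw [dif_neg h]
      apply Finset.sum_eq_zero
      intro l _
      rw [if_neg]
      intro hl
      omega

noncomputable def rr : ℕ → ℝ
  | 0 => 1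
  | 1 => 1
  | (n+2) => 4 * rr (n+1) - rr n

lemma rr_mono : ∀ n : ℕ, 1 ≤ rr n ∧ rr n ≤ rr (n+1) := by
  intro n
  induction n with
  | zero => simp [rr]
  | succ m ih =>
    obtain ⟨h1, h2⟩ := ih
    refine ⟨by linarith, ?_⟩
    show rr (m+1) ≤ rr (m+2)
    rw [rr]
    linarith

lemma rr_one_le (n : ℕ) : 1 ≤ rr n := (rr_mono n).1

lemma rr_le_succ (n : ℕ) : rr n ≤ rr (n+1) := (rr_mono n).2

lemma denom_pos (n : ℕ) (hn : 1 ≤ n) : 2 ≤ 3 * rr n - rr (n-1) := by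
  have h1 : rr (n-1) ≤ rr n := by
    have he : n - 1 + 1 = n := by omega
    have := rr_le_succ (n-1)
    rwa [he] at this
  have := rr_one_le n
  linarith

lemma rr_two : rr 2 = 3 := by
  show rr (0+2) = 3
  rw [rr]
  norm_num [rr]

lemma col_sum (n : ℕ) (k : Fin n) :
    (if h : (k:ℕ)+1 < n then rr (n-(k:ℕ)) - rr (n-((k:ℕ)+1)) else 0)
      + (if h : 0 < (k:ℕ) then rr (n-(k:ℕ)) - rr (n-((k:ℕ)-1)) else 0)
      + 2 * rr (n-(k:ℕ))
      = if (k:ℕ) = 0 then 3 * rr n - rr (n-1) else 0 := by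
  have hk : (k:ℕ) < n := k.isLt
  by_cases h0 : (k:ℕ) = 0
  · rw [if_pos h0, dif_neg (by omega : ¬ 0 < (k:ℕ))]
    have hn0 : n - (k:ℕ) = n := by omega
    by_cases h1 : (k:ℕ)+1 < n
    · rw [dif_pos h1]
      have e1 : n - ((k:ℕ)+1) = n - 1 := by omega
      rw [e1, hn0]
      ring
    · rw [dif_neg h1]
      have hn1 : n = 1 := by omega
      rw [hn0, hn1]
      norm_num [rr]
  · rw [if_neg h0]
    have hkpos : 0 < (k:ℕ) := by omega
    rw [dif_pos hkpos]
    by_cases h1 : (k:ℕ)+1 < n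
    · rw [dif_pos h1]
      obtain ⟨p, hp⟩ : ∃ p, n - (k:ℕ) = p + 1 := ⟨n - (k:ℕ) - 1, by omega⟩
      have e1 : n - ((k:ℕ)+1) = p := by omega
      have e2 : n - ((k:ℕ)-1) = p + 2 := by omega
      have e3 : rr (p+2) = 4 * rr (p+1) - rr p := by rw [rr]
      rw [e1, e2, hp, e3]
      ring
    · rw [dif_neg h1]
      have e1 : n - (k:ℕ) = 1 := by omega
      have e2 : n - ((k:ℕ)-1) = 2 := by omega
      rw [e1, e2, rr_two]
      have : rr 1 = 1 := by rw [rr]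
      rw [this]
      ring

/-- The node resistance curvature `p_x = 1 - (1/2) ∑_{y ~ x} ω_{x,y}`. -/
noncomputable def curv {V : Type*} [Fintype V] [DecidableEq V]
    (G : SimpleGraph V) (x : V) : ℝ :=
  1 - (1/2) * ∑ y : V, if G.Adj x y then effRes G x y else 0

/-- The grid graph `P_m □ P_n` (vertex `(i,j)` of the paper corresponds to
`(⟨i-1⟩, ⟨j-1⟩) : Fin m × Fin n`). -/
def grid (m n : ℕ) : SimpleGraph (Fin m × Fin n) :=
  (SimpleGraph.pathGraph m).boxProd (SimpleGraph.pathGraph n)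

/-- The ladder graph `P_2 □ P_n` (vertex `(i,k)` of the paper corresponds to
`(⟨i-1⟩, ⟨k-1⟩) : Fin 2 × Fin n`). -/
def ladder (n : ℕ) : SimpleGraph (Fin 2 × Fin n) :=
  (SimpleGraph.pathGraph 2).boxProd (SimpleGraph.pathGraph n)

lemma lap_ladder (n : ℕ) (hn : 0 < n) :
    (ladder n).lapMatrix ℝ *ᵥ
        (fun z => (if z.1 = (0 : Fin 2) then (1:ℝ) else -1) * rr (n - z.2.val)
          / (3 * rr n - rr (n-1)))
      = Pi.single ((0 : Fin 2), (⟨0, hn⟩ : Fin n)) 1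
        - Pi.single ((1 : Fin 2), (⟨0, hn⟩ : Fin n)) 1 := by
  classical
  have hD : (2:ℝ) ≤ 3 * rr n - rr (n-1) := denom_pos n hn
  have hDne : (3 * rr n - rr (n-1)) ≠ 0 := by linarith
  set D : ℝ := 3 * rr n - rr (n-1) with hDdef
  set v : Fin 2 × Fin n → ℝ :=
    fun z => (if z.1 = (0 : Fin 2) then (1:ℝ) else -1) * rr (n - z.2.val) / D with hv
  funext z
  obtain ⟨i, k⟩ := z
  rw [lap_mulVec_if]
  rw [Fintype.sum_prod_type]
  rw [Fin.sum_univ_two]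
  have h00 : ¬ (SimpleGraph.pathGraph 2).Adj 0 0 := SimpleGraph.irrefl _
  have h01 : (SimpleGraph.pathGraph 2).Adj 0 1 := by
    rw [SimpleGraph.pathGraph_adj]; left; rfl
  have h10 : (SimpleGraph.pathGraph 2).Adj 1 0 := h01.symm
  have h11 : ¬ (SimpleGraph.pathGraph 2).Adj 1 1 := SimpleGraph.irrefl _
  have hRHS : ((Pi.single ((0 : Fin 2), (⟨0, hn⟩ : Fin n)) (1:ℝ)
      - Pi.single ((1 : Fin 2), (⟨0, hn⟩ : Fin n)) 1 : Fin 2 × Fin n → ℝ)) (i, k)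
      = (if i = 0 then (1:ℝ) else -1) * (if (k:ℕ) = 0 then 1 else 0) := by
    simp only [Pi.sub_apply, Pi.single_apply, Prod.mk.injEq]
    by_cases hi : i = 0
    · have hi1 : i ≠ 1 := by rw [hi]; decide
      by_cases hk : (k:ℕ) = 0
      · have hkk : k = ⟨0, hn⟩ := Fin.ext hk
        simp [hi, hi1, hkk, hk]
      · have hkk : k ≠ ⟨0, hn⟩ := fun h => hk (by rw [h])
        simp [hi, hi1, hkk, hk]
    · have hi1 : i = 1 := by omega
      by_cases hk : (k:ℕ) = 0
      · have hkk : k = ⟨0, hn⟩ := Fin.ext hk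
        simp [hi, hi1, hkk, hk]
      · have hkk : k ≠ ⟨0, hn⟩ := fun h => hk (by rw [h])
        simp [hi, hi1, hkk, hk]
  rw [hRHS]
  have key := col_sum n k
  have hval0 : ∀ l : Fin n, v (0, l) = rr (n - (l:ℕ)) / D := by
    intro l; simp [hv]
  have hval1 : ∀ l : Fin n, v (1, l) = -(rr (n - (l:ℕ)) / D) := by
    intro l
    simp only [hv]
    rw [if_neg (by decide : ¬ (1:Fin 2) = 0)]
    ring
  have hadj0 : ∀ l : Fin n, (ladder n).Adj (0, k) (0, l) ↔ (SimpleGraph.pathGraph n).Adj k l := by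
    intro l
    simp [ladder, SimpleGraph.boxProd_adj, h00]
  have hadj01 : ∀ l : Fin n, (ladder n).Adj (0, k) (1, l) ↔ k = l := by
    intro l
    simp [ladder, SimpleGraph.boxProd_adj, h01, (by decide : ¬ (0:Fin 2) = 1)]
  have hadj10 : ∀ l : Fin n, (ladder n).Adj (1, k) (0, l) ↔ k = l := by
    intro l
    simp [ladder, SimpleGraph.boxProd_adj, h10, (by decide : ¬ (1:Fin 2) = 0)]
  have hadj1 : ∀ l : Fin n, (ladder n).Adj (1, k) (1, l) ↔ (SimpleGraph.pathGraph n).Adj k l := by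
    intro l
    simp [ladder, SimpleGraph.boxProd_adj, h11]
  by_cases hi : i = 0
  · subst hi
    simp only [hadj0, hadj01]
    rw [path_sum k (fun l => v (0, k) - v (0, l))]
    rw [Finset.sum_ite_eq]
    simp only [Finset.mem_univ, if_true, hval0, hval1, if_pos rfl]
    rw [sub_neg_eq_add, one_mul]
    by_cases h1 : (k:ℕ)+1 < n <;> by_cases h2 : 0 < (k:ℕ)
    · rw [dif_pos h1, dif_pos h2] at key ⊢
      rw [if_neg (by omega : ¬ (k:ℕ) = 0)] at key ⊢
      field_simp
      linarith
    · rw [dif_pos h1, dif_neg h2] at key ⊢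
      rw [if_pos (by omega : (k:ℕ) = 0)] at key ⊢
      field_simp
      linarith
    · rw [dif_neg h1, dif_pos h2] at key ⊢
      rw [if_neg (by omega : ¬ (k:ℕ) = 0)] at key ⊢
      field_simp
      linarith
    · rw [dif_neg h1, dif_neg h2] at key ⊢
      rw [if_pos (by omega : (k:ℕ) = 0)] at key ⊢
      field_simp
      linarith
  · have hi1 : i = 1 := by omega
    subst hi1
    simp only [hadj10, hadj1]
    rw [path_sum k (fun l => v (1, k) - v (1, l))]
    rw [Finset.sum_ite_eq]
    simp only [Finset.mem_univ, if_true, hval0, hval1]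
    rw [if_neg (by decide : ¬ (1:Fin 2) = 0)]
    by_cases h1 : (k:ℕ)+1 < n <;> by_cases h2 : 0 < (k:ℕ)
    · rw [dif_pos h1, dif_pos h2] at key ⊢
      rw [if_neg (by omega : ¬ (k:ℕ) = 0)] at key ⊢
      field_simp
      first
      | linarith
      | linear_combination D * key
      | linear_combination (-D) * key
      | linear_combination key
      | linear_combination -key
    · rw [dif_pos h1, dif_neg h2] at key ⊢
      rw [if_pos (by omega : (k:ℕ) = 0)] at key ⊢
      field_simp
      first
      | linarith
      | linear_combination D * key
      | linear_combination (-D) * key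
      | linear_combination key
      | linear_combination -key
    · rw [dif_neg h1, dif_pos h2] at key ⊢
      rw [if_neg (by omega : ¬ (k:ℕ) = 0)] at key ⊢
      field_simp
      first
      | linarith
      | linear_combination D * key
      | linear_combination (-D) * key
      | linear_combination key
      | linear_combination -key
    · rw [dif_neg h1, dif_neg h2] at key ⊢
      rw [if_pos (by omega : (k:ℕ) = 0)] at key ⊢
      field_simp
      first
      | linarith
      | linear_combination D * key
      | linear_combination (-D) * key
      | linear_combination key
      | linear_combination -key

/-- `α_n`, the effective resistance across the first rung of the ladder `P_2 □ P_n`,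
i.e. between the vertices `(1,1)` and `(2,1)` of the paper (junk value `0` for `n = 0`). -/
noncomputable def alpha (n : ℕ) : ℝ :=
  if h : 0 < n then effRes (ladder n) (0, ⟨0, h⟩) (1, ⟨0, h⟩) else 0

lemma alpha_formula (n : ℕ) (hn : 0 < n) :
    alpha n = 2 * rr n / (3 * rr n - rr (n-1)) := by
  rw [alpha, dif_pos hn]
  haveI : Nonempty (Fin 2 × Fin n) := ⟨(0, ⟨0, hn⟩)⟩
  have hconn : (ladder n).Connected := by
    obtain ⟨m, rfl⟩ : ∃ m, n = m + 1 := ⟨n-1, by omega⟩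
    exact SimpleGraph.Connected.boxProd (SimpleGraph.pathGraph_connected 1)
      (SimpleGraph.pathGraph_connected m)
  rw [effRes_eq_of_mulVec (ladder n) hconn _ _ _ (lap_ladder n hn)]
  norm_num
  ring

lemma alpha_one : alpha 1 = 1 := by
  rw [alpha_formula 1 (by norm_num)]
  norm_num [rr]

lemma alpha_pos (n : ℕ) (hn : 0 < n) : 0 < alpha n := by
  rw [alpha_formula n hn]
  have h1 := rr_one_le n
  have h2 := denom_pos n hn
  positivity

lemma alpha_rec (n : ℕ) (hn : 0 < n) :
    alpha (n+1) = (2 + alpha n) / (3 + alpha n) := by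
  rw [alpha_formula (n+1) (by omega), alpha_formula n hn]
  have hd1 := denom_pos n hn
  have hd2 := denom_pos (n+1) (by omega)
  have hsimp : n + 1 - 1 = n := by omega
  rw [hsimp] at hd2 ⊢
  have hr : rr (n+1) = 4 * rr n - rr (n-1) := by
    obtain ⟨m, rfl⟩ : ∃ m, n = m + 1 := ⟨n-1, by omega⟩
    have : m + 1 + 1 = m + 2 := rfl
    rw [this, rr]
    norm_num
  have hane : (3 * rr n - rr (n-1)) ≠ 0 := by linarith
  have hane2 : (3 * rr (n+1) - rr n) ≠ 0 := by linarith
  have hden3 : 3 + 2 * rr n / (3 * rr n - rr (n-1)) ≠ 0 := by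
    have h1 := rr_one_le n
    have : 0 < 2 * rr n / (3 * rr n - rr (n-1)) := by positivity
    linarith
  rw [hr] at hane2 ⊢
  rw [div_eq_div_iff hane2 hden3]
  have hc' : 2 * rr n / (3 * rr n - rr (n-1)) * (3 * rr n - rr (n-1)) = 2 * rr n :=
    div_mul_cancel₀ _ hane
  linear_combination (-1) * hc'

lemma sqrt3_sq : Real.sqrt 3 ^ 2 = 3 := Real.sq_sqrt (by norm_num)

lemma sqrt3_gt_one : 1 < Real.sqrt 3 := by
  nlinarith [Real.sqrt_nonneg 3, sqrt3_sq]

lemma sqrt3_lt_two : Real.sqrt 3 < 2 := by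
  nlinarith [Real.sqrt_nonneg 3, sqrt3_sq]

lemma alpha_gt (n : ℕ) (hn : 0 < n) : Real.sqrt 3 - 1 < alpha n := by
  induction n with
  | zero => omega
  | succ m ih =>
    by_cases hm : 0 < m
    · have h1 := ih hm
      have hpos := alpha_pos m hm
      rw [alpha_rec m hm]
      have hden : (0:ℝ) < 3 + alpha m := by linarith
      rw [lt_div_iff₀ hden]
      have hprod : (0:ℝ) < (2 - Real.sqrt 3) * (alpha m - (Real.sqrt 3 - 1)) :=
        mul_pos (by linarith [sqrt3_lt_two]) (by linarith)
      nlinarith [sqrt3_sq]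
    · have hm0 : m = 0 := by omega
      subst hm0
      rw [alpha_one]
      linarith [sqrt3_lt_two]

lemma alpha_sub_identity (n : ℕ) (hn : 0 < n) :
    alpha (n+1) - (Real.sqrt 3 - 1)
      = (2 - Real.sqrt 3) * (alpha n - (Real.sqrt 3 - 1)) / (3 + alpha n) := by
  have hpos := alpha_pos n hn
  have hden : (0:ℝ) < 3 + alpha n := by linarith
  rw [alpha_rec n hn]
  field_simp
  linear_combination -sqrt3_sq

lemma alpha_dec (n : ℕ) (hn : 0 < n) : alpha (n+1) < alpha n := by
  have h1 := alpha_gt n hn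
  have hpos := alpha_pos n hn
  have hid := alpha_sub_identity n hn
  have hden : (0:ℝ) < 3 + alpha n := by linarith
  have hlt : (2 - Real.sqrt 3) * (alpha n - (Real.sqrt 3 - 1)) / (3 + alpha n)
      < alpha n - (Real.sqrt 3 - 1) := by
    rw [div_lt_iff₀ hden]
    nlinarith [sqrt3_gt_one, sqrt3_lt_two]
  linarith [hid.trans_lt hlt]

lemma alpha_decay (n : ℕ) (hn : 0 < n) :
    alpha (n+1) - (Real.sqrt 3 - 1) ≤ (alpha n - (Real.sqrt 3 - 1)) / 3 := by
  have h1 := alpha_gt n hn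
  have hpos := alpha_pos n hn
  have hid := alpha_sub_identity n hn
  have hden : (0:ℝ) < 3 + alpha n := by linarith
  rw [hid, div_le_div_iff₀ hden (by norm_num)]
  nlinarith [sqrt3_gt_one]

lemma alpha_geo (m : ℕ) :
    alpha (m+1) - (Real.sqrt 3 - 1) ≤ (alpha 1 - (Real.sqrt 3 - 1)) * (1/3:ℝ)^m := by
  induction m with
  | zero => simp
  | succ p ih =>
    have h1 := alpha_decay (p+1) (by omega)
    have : (alpha (p+1) - (Real.sqrt 3 - 1)) / 3
        ≤ (alpha 1 - (Real.sqrt 3 - 1)) * (1/3:ℝ)^p / 3 := by linarith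
    calc alpha (p+2) - (Real.sqrt 3 - 1) ≤ (alpha (p+1) - (Real.sqrt 3 - 1)) / 3 := h1
    _ ≤ (alpha 1 - (Real.sqrt 3 - 1)) * (1/3:ℝ)^p / 3 := this
    _ = (alpha 1 - (Real.sqrt 3 - 1)) * (1/3:ℝ)^(p+1) := by
        rw [pow_succ]; ring

lemma alpha_tendsto :
    Filter.Tendsto alpha Filter.atTop (nhds (Real.sqrt 3 - 1)) := by
  have hsub : Filter.Tendsto (fun n => alpha n - (Real.sqrt 3 - 1))
      Filter.atTop (nhds 0) := by
    have hgeo0 : Filter.Tendsto (fun m : ℕ => (alpha 1 - (Real.sqrt 3 - 1)) * (1/3:ℝ)^m)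
        Filter.atTop (nhds 0) := by
      have := (tendsto_pow_atTop_nhds_zero_of_lt_one (by norm_num : (0:ℝ) ≤ 1/3)
        (by norm_num : (1/3:ℝ) < 1)).const_mul (alpha 1 - (Real.sqrt 3 - 1))
      simpa using this
    have hcomp : Filter.Tendsto
        (fun n : ℕ => (alpha 1 - (Real.sqrt 3 - 1)) * (1/3:ℝ)^(n-1))
        Filter.atTop (nhds 0) := hgeo0.comp (Filter.tendsto_sub_atTop_nat 1)
    apply tendsto_of_tendsto_of_tendsto_of_le_of_le' tendsto_const_nhds hcomp
    · filter_upwards [Filter.eventually_ge_atTop 1] with n hn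
      linarith [alpha_gt n (by omega)]
    · filter_upwards [Filter.eventually_ge_atTop 1] with n hn
      have := alpha_geo (n-1)
      have he : n - 1 + 1 = n := by omega
      rwa [he] at this
  have := hsub.add_const (Real.sqrt 3 - 1)
  simpa using this

theorem alpha_anti_and_tendsto :
    (∀ n : ℕ, 1 ≤ n → alpha (n + 1) < alpha n) ∧
    (∀ n : ℕ, 1 ≤ n → Real.sqrt 3 - 1 < alpha n) ∧
    Filter.Tendsto alpha Filter.atTop (nhds (Real.sqrt 3 - 1)) :=
  ⟨fun n hn => alpha_dec n hn, fun n hn => alpha_gt n hn, alpha_tendsto⟩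
end

section
/- Let α_n be the effective resistance across the first rung of the ladder graph P_2 □ P_n. For n ≥ 2 and i ∈ {1,2}, the effective resistance across the (i,1)-th rail of P_2 □ P_n (i.e., between (i,1) and (i,2)) equals α_n. -/
open Classical Matrix

section MPuniq

variable {V : Type*} [Fintype V] [DecidableEq V]

lemma pinv_isMP {L : Matrix V V ℝ} (h : ∃ P, IsMoorePenroseInverse L P) :
    IsMoorePenroseInverse L (pinv L) := by
  rw [pinv, dif_pos h]; exact h.choose_spec

lemma isMP_submatrix {L P : Matrix V V ℝ} (e : V ≃ V)
    (h : IsMoorePenroseInverse L P) :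
    IsMoorePenroseInverse (L.submatrix e e) (P.submatrix e e) := by
  obtain ⟨h1, h2, h3, h4⟩ := h
  refine ⟨?_, ?_, ?_, ?_⟩ <;>
    simp only [Matrix.submatrix_mul_equiv, Matrix.transpose_submatrix, h1, h2, h3, h4]

end MPuniq

section LapPinv

variable {V : Type*} [Fintype V] [DecidableEq V]

/-- The all-ones matrix. -/
def allOnes (V : Type*) : Matrix V V ℝ := Matrix.of fun _ _ => (1 : ℝ)

/-- Existence (and key properties) of the Moore–Penrose pseudoinverse of a
symmetric matrix with kernel exactly the constants. -/
lemma exists_mp_s10 [Nonempty V] {L : Matrix V V ℝ} (hL : Lᵀ = L)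
    (hL1 : L *ᵥ (fun _ => (1 : ℝ)) = 0)
    (hker : ∀ w : V → ℝ, L *ᵥ w = 0 → ∀ x y : V, w x = w y) :
    ∃ P : Matrix V V ℝ, IsMoorePenroseInverse L P ∧ Pᵀ = P ∧
      L * P = 1 - ((Fintype.card V : ℝ)⁻¹) • allOnes V := by
  classical
  set J : Matrix V V ℝ := allOnes V with hJdef
  set N : ℕ := Fintype.card V with hNdef
  have hNpos : 0 < N := Fintype.card_pos
  have hNne : (N : ℝ) ≠ 0 := by positivity
  set c : ℝ := (N : ℝ)⁻¹ with hcdef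
  have hcne : c ≠ 0 := by simp [hcdef, hNne]
  have hcN : c * (N : ℝ) = 1 := inv_mul_cancel₀ hNne
  have hJT : Jᵀ = J := rfl
  have hLJ : L * J = 0 := by
    ext x y
    have h1 := congrFun hL1 x
    simp only [Matrix.mulVec, dotProduct, mul_one, Pi.zero_apply] at h1
    simp [Matrix.mul_apply, hJdef, allOnes, h1]
  have hJL : J * L = 0 := by
    have h := congrArg Matrix.transpose hLJ
    rwa [Matrix.transpose_mul, hL, hJT, Matrix.transpose_zero] at h
  have hJJ : J * J = (N : ℝ) • J := by
    ext x y
    simp [Matrix.mul_apply, hJdef, allOnes, hNdef, Finset.card_univ]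
  set B : Matrix V V ℝ := L + c • J with hBdef
  have hBt : Bᵀ = B := by
    rw [hBdef, Matrix.transpose_add, Matrix.transpose_smul, hL, hJT]
  have hkerB : ∀ w : V → ℝ, B *ᵥ w = 0 → w = 0 := by
    intro w hw
    have hBw : ∀ x, (L *ᵥ w) x + c * (∑ j, w j) = 0 := by
      intro x
      have h0 := congrFun hw x
      simp only [hBdef, Matrix.add_mulVec, Matrix.smul_mulVec, Pi.add_apply,
        Pi.smul_apply, Pi.zero_apply, smul_eq_mul] at h0
      have hJw : (J *ᵥ w) x = ∑ j, w j := by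
        simp [Matrix.mulVec, dotProduct, hJdef, allOnes]
      rw [hJw] at h0
      exact h0
    have hswap : ∀ x j, L x j = L j x := fun x j => (show L.IsSymm from hL).apply j x
    have hcol : ∀ j, ∑ x, L x j = 0 := by
      intro j
      have h1 := congrFun hL1 j
      simp only [Matrix.mulVec, dotProduct, mul_one, Pi.zero_apply] at h1
      calc ∑ x, L x j = ∑ x, L j x := Finset.sum_congr rfl fun x _ => hswap x j
      _ = 0 := h1
    have hsum0 : ∑ x, (L *ᵥ w) x = 0 := by
      have hrw : ∑ x, (L *ᵥ w) x = ∑ j, (∑ x, L x j) * w j := by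
        simp only [Matrix.mulVec, dotProduct, Finset.sum_mul]
        rw [Finset.sum_comm]
      rw [hrw]
      simp [hcol]
    have hs : ∑ j, w j = 0 := by
      have h0 : (∑ x, ((L *ᵥ w) x + c * (∑ j, w j))) = 0 := by
        simp [hBw]
      rw [Finset.sum_add_distrib, hsum0, zero_add, Finset.sum_const,
        Finset.card_univ, ← hNdef, nsmul_eq_mul] at h0
      rcases mul_eq_zero.mp h0 with h | h
      · exact absurd h hNne
      · rcases mul_eq_zero.mp h with h' | h'
        · exact absurd h' hcne
        · exact h'
    have hLw : L *ᵥ w = 0 := by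
      funext x
      have h0 := hBw x
      rw [hs, mul_zero, add_zero] at h0
      exact h0
    have hconst := hker w hLw
    funext x
    have h1 : ∑ j, w j = (N : ℝ) * w x := by
      rw [show ∑ j, w j = ∑ _j : V, w x from Finset.sum_congr rfl fun j _ => hconst j x]
      simp [Finset.card_univ, hNdef, mul_comm]
    rw [hs] at h1
    rcases mul_eq_zero.mp h1.symm with h | h
    · exact absurd h hNne
    · exact h
  have hBunit : IsUnit B := by
    rw [← Matrix.mulVec_injective_iff_isUnit]
    intro u v huv
    have h0 : B *ᵥ (u - v) = 0 := by
      rw [Matrix.mulVec_sub]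
      rw [show B.mulVec u = B.mulVec v from huv]
      simp
    exact sub_eq_zero.mp (hkerB _ h0)
  have hdet : IsUnit B.det := (Matrix.isUnit_iff_isUnit_det B).mp hBunit
  have hBB : B * B⁻¹ = 1 := Matrix.mul_nonsing_inv B hdet
  have hB'B : B⁻¹ * B = 1 := Matrix.nonsing_inv_mul B hdet
  have hBJ : B * J = J := by
    rw [hBdef, Matrix.add_mul, hLJ, zero_add, Matrix.smul_mul, hJJ, smul_smul, hcN, one_smul]
  have hJB : J * B = J := by
    rw [hBdef, Matrix.mul_add, hJL, zero_add, Matrix.mul_smul, hJJ, smul_smul, hcN, one_smul]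
  have hJBi : J * B⁻¹ = J := by
    calc J * B⁻¹ = (J * B) * B⁻¹ := by rw [hJB]
    _ = J * (B * B⁻¹) := by rw [Matrix.mul_assoc]
    _ = J := by rw [hBB, Matrix.mul_one]
  have hBiJ : B⁻¹ * J = J := by
    calc B⁻¹ * J = B⁻¹ * (B * J) := by rw [hBJ]
    _ = (B⁻¹ * B) * J := by rw [Matrix.mul_assoc]
    _ = J := by rw [hB'B, Matrix.one_mul]
  set P : Matrix V V ℝ := B⁻¹ - c • J with hPdef
  have hLB : L = B - c • J := by rw [hBdef, add_sub_cancel_right]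
  have e1 : B * (c • J) = c • J := by rw [Matrix.mul_smul, hBJ]
  have e2 : (c • J) * B⁻¹ = c • J := by rw [Matrix.smul_mul, hJBi]
  have e3 : (c • J) * (c • J) = c • J := by
    rw [Matrix.smul_mul, Matrix.mul_smul, hJJ, smul_smul, smul_smul, mul_assoc, hcN, mul_one]
  have e4 : B⁻¹ * (c • J) = c • J := by rw [Matrix.mul_smul, hBiJ]
  have e5 : (c • J) * B = c • J := by rw [Matrix.smul_mul, hJB]
  have hLP : L * P = 1 - c • J := by
    calc L * P = (B - c • J) * (B⁻¹ - c • J) := by rw [← hLB]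
    _ = B * B⁻¹ - B * (c • J) - ((c • J) * B⁻¹ - (c • J) * (c • J)) := by
          rw [Matrix.sub_mul, Matrix.mul_sub, Matrix.mul_sub]
    _ = 1 - c • J - (c • J - c • J) := by rw [hBB, e1, e2, e3]
    _ = 1 - c • J := by rw [sub_self, sub_zero]
  have hPL : P * L = 1 - c • J := by
    calc P * L = (B⁻¹ - c • J) * (B - c • J) := by rw [← hLB]
    _ = B⁻¹ * B - B⁻¹ * (c • J) - ((c • J) * B - (c • J) * (c • J)) := by
          rw [Matrix.sub_mul, Matrix.mul_sub, Matrix.mul_sub]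
    _ = 1 - c • J - (c • J - c • J) := by rw [hB'B, e4, e5, e3]
    _ = 1 - c • J := by rw [sub_self, sub_zero]
  have hJP : J * P = 0 := by
    rw [hPdef, Matrix.mul_sub, hJBi, Matrix.mul_smul, hJJ, smul_smul, hcN, one_smul, sub_self]
  have hPt : Pᵀ = P := by
    rw [hPdef, Matrix.transpose_sub, Matrix.transpose_smul, hJT,
      Matrix.transpose_nonsing_inv, hBt]
  refine ⟨P, ⟨?_, ?_, ?_, ?_⟩, hPt, hLP⟩
  · rw [hLP, Matrix.sub_mul, Matrix.one_mul, Matrix.smul_mul, hJL, smul_zero, sub_zero]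
  · rw [show P * L * P = (P * L) * P from rfl, hPL, Matrix.sub_mul, Matrix.one_mul,
      Matrix.smul_mul, hJP, smul_zero, sub_zero]
  · rw [hLP, Matrix.transpose_sub, Matrix.transpose_one, Matrix.transpose_smul, hJT]
  · rw [hPL, Matrix.transpose_sub, Matrix.transpose_one, Matrix.transpose_smul, hJT]

end LapPinv

section Ladder

lemma ladder_connected {n : ℕ} (hn : 1 ≤ n) : (ladder n).Connected := by
  obtain ⟨m, rfl⟩ : ∃ m, n = m + 1 := ⟨n - 1, by omega⟩
  exact SimpleGraph.connected_boxProd.mpr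
    ⟨SimpleGraph.pathGraph_connected 1, SimpleGraph.pathGraph_connected m⟩

lemma ladder_lap_ker {n : ℕ} (hn : 1 ≤ n) (w : Fin 2 × Fin n → ℝ)
    (hw : (ladder n).lapMatrix ℝ *ᵥ w = 0) : ∀ x y, w x = w y := by
  have h := ((ladder n).lapMatrix_mulVec_eq_zero_iff_forall_reachable (x := w)).mp hw
  intro x y
  exact h x y ((ladder_connected hn).preconnected x y)

end Ladder

theorem first_rail_effres (n : ℕ) (hn : 2 ≤ n) (i : Fin 2) :
    effRes (ladder n) (i, ⟨0, by omega⟩) (i, ⟨1, by omega⟩) = alpha n := by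
  classical
  have h0 : 0 < n := by omega
  have h1 : 1 < n := by omega
  set G := ladder n with hGdef
  set L : Matrix (Fin 2 × Fin n) (Fin 2 × Fin n) ℝ := G.lapMatrix ℝ with hLdef
  set k0 : Fin n := ⟨0, h0⟩ with hk0
  set k1 : Fin n := ⟨1, h1⟩ with hk1
  set a : (Fin 2 × Fin n) := ((0 : Fin 2), k0) with ha
  set b : (Fin 2 × Fin n) := ((1 : Fin 2), k0) with hb
  set a' : (Fin 2 × Fin n) := ((0 : Fin 2), k1) with ha'
  set b' : (Fin 2 × Fin n) := ((1 : Fin 2), k1) with hb'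
  haveI : Nonempty (Fin 2 × Fin n) := ⟨a⟩
  -- the pseudoinverse and its properties
  obtain ⟨P, hMP, hPt, hLPeq⟩ := exists_mp_s10
    (show Lᵀ = L from G.isSymm_lapMatrix ℝ)
    (G.lapMatrix_mulVec_const_eq_zero)
    (ladder_lap_ker (by omega))
  have hg : pinv L = P := pinv_eq hMP
  set g := pinv L with hgdef
  have hgt : gᵀ = g := by rw [hg]; exact hPt
  have Fsym : ∀ x y, g x y = g y x := fun x y => congrFun (congrFun hgt y) x
  set c : ℝ := ((Fintype.card (Fin 2 × Fin n) : ℝ))⁻¹ with hc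
  have Fproj : L * g = 1 - c • allOnes (Fin 2 × Fin n) := by rw [hg]; exact hLPeq
  -- adjacency of the corner vertex
  have hadj : ∀ z : (Fin 2 × Fin n), G.Adj a z ↔ z = b ∨ z = a' := by
    rintro ⟨zi, zk⟩
    have hzi := zi.isLt
    have hzk := zk.isLt
    simp only [hGdef, ladder, ha, hb, ha', hk0, hk1, SimpleGraph.boxProd_adj,
      SimpleGraph.pathGraph_adj, Prod.mk.injEq, Fin.ext_iff, Fin.val_zero, Fin.val_one, Fin.val_mk]
    omega
  have hbne : b ≠ a' := by
    rw [hb, ha']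
    intro h
    have h2 := congrArg Prod.fst h
    simp at h2
  have hnb : G.neighborFinset a = {b, a'} := by
    ext z
    simp only [SimpleGraph.mem_neighborFinset, hadj, Finset.mem_insert, Finset.mem_singleton]
  have hdeg : G.degree a = 2 := by
    show (G.neighborFinset a).card = 2
    rw [hnb]
    rw [Finset.card_insert_of_notMem (by simp [hbne]), Finset.card_singleton]
  -- the two row equations
  have entry : ∀ y : (Fin 2 × Fin n), a ≠ y →
      2 * g a y - (g b y + g a' y) = -c := by
    intro y hy
    have e0 : (L * g) a y = -c := by
      rw [Fproj]
      simp [Matrix.sub_apply, Matrix.one_apply_ne hy, allOnes, Matrix.smul_apply]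
    have e1 : (L * g) a y = (G.degree a : ℝ) * g a y - ∑ u ∈ G.neighborFinset a, g u y := by
      rw [show (L * g) a y = (L *ᵥ fun z => g z y) a by
        simp [Matrix.mul_apply, Matrix.mulVec, dotProduct]]
      exact G.lapMatrix_mulVec_apply a (fun z => g z y)
    rw [e1, hdeg, hnb, Finset.sum_pair hbne] at e0
    push_cast at e0
    linarith [e0]
  have hab : a ≠ b := by
    rw [ha, hb]
    intro h
    have h2 := congrArg Prod.fst h
    simp at h2
  have haa' : a ≠ a' := by
    rw [ha, ha', hk0, hk1]
    intro h
    have h2 := congrArg Fin.val (congrArg Prod.snd h)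
    simp only [Fin.val_mk] at h2
    omega
  have EB := entry b hab
  have EC := entry a' haa'
  have key : g a' a' - 2 * g a a' = g b b - 2 * g a b := by
    have hsym := Fsym b a'
    linarith [EB, EC]
  -- invariance under the row swap
  set e : (Fin 2 × Fin n) ≃ (Fin 2 × Fin n) := (Equiv.addLeft (1 : Fin 2)).prodCongr (Equiv.refl (Fin n)) with hedef
  have hadjinv : ∀ x y : (Fin 2 × Fin n), G.Adj (e x) (e y) ↔ G.Adj x y := by
    rintro ⟨xi, xk⟩ ⟨yi, yk⟩
    have hxi := xi.isLt
    have hyi := yi.isLt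
    show G.Adj (1 + xi, xk) (1 + yi, yk) ↔ G.Adj (xi, xk) (yi, yk)
    simp only [hGdef, ladder, SimpleGraph.boxProd_adj, SimpleGraph.pathGraph_adj,
      Fin.ext_iff, Fin.val_add, Fin.val_one]
    omega
  have hnbinv : ∀ x : (Fin 2 × Fin n), G.neighborFinset (e x) = (G.neighborFinset x).map e.toEmbedding := by
    intro x
    ext z
    simp only [SimpleGraph.mem_neighborFinset, Finset.mem_map, Equiv.coe_toEmbedding]
    constructor
    · intro hz
      refine ⟨e.symm z, ?_, by simp⟩
      have h4 := hadjinv x (e.symm z)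
      rw [Equiv.apply_symm_apply] at h4
      exact h4.mp hz
    · rintro ⟨w, hw, rfl⟩
      exact (hadjinv x w).mpr hw
  have hdeginv : ∀ x : (Fin 2 × Fin n), G.degree (e x) = G.degree x := by
    intro x
    show (G.neighborFinset (e x)).card = (G.neighborFinset x).card
    rw [hnbinv, Finset.card_map]
  have hLsub : L.submatrix e e = L := by
    ext x y
    show L (e x) (e y) = L x y
    simp only [hLdef, SimpleGraph.lapMatrix, Matrix.sub_apply, SimpleGraph.degMatrix,
      Matrix.diagonal_apply, SimpleGraph.adjMatrix_apply]
    by_cases hxy : x = y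
    · subst hxy
      simp [hdeginv x, hadjinv x x]
    · rw [if_neg hxy, if_neg (fun h => hxy (e.injective h)),
        if_congr (hadjinv x y) rfl rfl]
  have hginv : ∀ x y : (Fin 2 × Fin n), g (e x) (e y) = g x y := by
    intro x y
    have hMP2 : IsMoorePenroseInverse L (g.submatrix e e) := by
      have := isMP_submatrix e (pinv_isMP (L := L) ⟨P, hMP⟩)
      rwa [hLsub] at this
    have h2 : g = g.submatrix e e := pinv_eq hMP2
    exact (congrFun (congrFun h2 x) y).symm
  have hea : e a = b := by
    show ((1 : Fin 2) + 0, k0) = b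
    rw [hb]
    norm_num
  have hea' : e a' = b' := by
    show ((1 : Fin 2) + 0, k1) = b'
    rw [hb']
    norm_num
  -- unfold alpha
  have halpha : alpha n = g a a + g b b - 2 * g a b := by
    rw [alpha, dif_pos h0]
    rfl
  -- finish by cases on i
  have main : effRes G a a' = alpha n := by
    show g a a + g a' a' - 2 * g a a' = alpha n
    rw [halpha]
    linarith [key]
  fin_cases i
  · exact main
  · show effRes G b b' = alpha n
    have hbb : g b b = g a a := by rw [← hea]; exact hginv a a
    have hbb' : g b' b' = g a' a' := by rw [← hea']; exact hginv a' a'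
    have hbab : g b b' = g a a' := by rw [← hea, ← hea']; exact hginv a a'
    show g b b + g b' b' - 2 * g b b' = alpha n
    rw [hbb, hbb', hbab, halpha]
    linarith [key]
end
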